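/- (Stability of the consensus-error LTI system.) Let 0 ≤ σ_W < 1, L' > 0, Θ = (1+σ_W²)/(1−σ_W²), and define the 2×2 nonnegative matrix G̃ = [[(1+σ_W²)/2 + 4L'²α²Θ, 8Θ], [α²L'²Θ, (1+σ_W²)/2]]. If 0 < α < (1−σ_W²)² / (16L'(1+σ_W²)), then the spectral radius of G̃ is strictly less than 1. -/

import Mathlib

open Matrix BigOperators Finset

noncomputable section

namespace DRFGT

/-- Frobenius inner product `⟨A, B⟩ = Tr (A Bᵀ)`. -/
def finner {m k : Type*} [Fintype m] [Fintype k] (A B : Matrix m k ℝ) : ℝ :=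
  Matrix.trace (A * Bᵀ)

/-- Frobenius norm `‖A‖_F = √⟨A, A⟩`. -/
def fnorm {m k : Type*} [Fintype m] [Fintype k] (A : Matrix m k ℝ) : ℝ :=
  Real.sqrt (finner A A)

/-- Skew part of a square matrix, `skew(A) = (A − Aᵀ)/2`. -/
def mskew {m : Type*} [Fintype m] (A : Matrix m m ℝ) : Matrix m m ℝ :=
  (2 : ℝ)⁻¹ • (A - Aᵀ)

/-- Symmetric part of a square matrix, `sym(A) = (A + Aᵀ)/2`. -/
def msym {m : Type*} [Fintype m] (A : Matrix m m ℝ) : Matrix m m ℝ :=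
  (2 : ℝ)⁻¹ • (A + Aᵀ)

/-- Relative (Riemannian) gradient `grad f(x) = skew(∇f(x) xᵀ) x`, where `Df` denotes the
Euclidean gradient `∇f` of `f`. -/
def rgrad {d r : ℕ} (Df : Matrix (Fin d) (Fin r) ℝ → Matrix (Fin d) (Fin r) ℝ)
    (x : Matrix (Fin d) (Fin r) ℝ) : Matrix (Fin d) (Fin r) ℝ :=
  mskew (Df x * xᵀ) * x

/-- Landing field `Λ(x) = grad f(x) + λ x (xᵀ x − I_r)`. -/
def landing {d r : ℕ} (Df : Matrix (Fin d) (Fin r) ℝ → Matrix (Fin d) (Fin r) ℝ) (lam : ℝ)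
    (x : Matrix (Fin d) (Fin r) ℝ) : Matrix (Fin d) (Fin r) ℝ :=
  rgrad Df x + lam • (x * (xᵀ * x - 1))

/-- The Stiefel manifold `St(d,r) = {x : xᵀ x = I_r}`. -/
def St (d r : ℕ) : Set (Matrix (Fin d) (Fin r) ℝ) := {x | xᵀ * x = 1}

/-- The safety region `St(d,r)^ε = {x : ‖xᵀ x − I_r‖_F ≤ ε}`. -/
def StEps (d r : ℕ) (ε : ℝ) : Set (Matrix (Fin d) (Fin r) ℝ) :=
  {x | fnorm (xᵀ * x - 1) ≤ ε}

/-- The merit function `𝓛(x) = f(x) − ½⟨sym(xᵀ∇f(x)), xᵀx − I_r⟩ + γ·¼‖xᵀx − I_r‖_F²`. -/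
def merit {d r : ℕ} (f : Matrix (Fin d) (Fin r) ℝ → ℝ)
    (Df : Matrix (Fin d) (Fin r) ℝ → Matrix (Fin d) (Fin r) ℝ) (γ : ℝ)
    (x : Matrix (Fin d) (Fin r) ℝ) : ℝ :=
  f x - (2 : ℝ)⁻¹ * finner (msym (xᵀ * Df x)) (xᵀ * x - 1)
    + γ * (4 : ℝ)⁻¹ * fnorm (xᵀ * x - 1) ^ 2

/-- The gradient of the merit function at on-manifold points:
`∇𝓛(x) = ∇f(x) − x · sym(xᵀ∇f(x))` for `x ∈ St(d,r)`. -/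
def meritGradSt {d r : ℕ} (Df : Matrix (Fin d) (Fin r) ℝ → Matrix (Fin d) (Fin r) ℝ)
    (x : Matrix (Fin d) (Fin r) ℝ) : Matrix (Fin d) (Fin r) ℝ :=
  Df x - x * msym (xᵀ * Df x)

/-- `x'` is the polar factor of a full-column-rank `x`, i.e. the projection `Proj_St(x)` of `x`
onto the Stiefel manifold: if `x = U S Vᵀ` is a thin SVD then `x' = U Vᵀ`, equivalently
`x'ᵀ x' = I_r` and `x = x' P` for a positive definite `P` (namely `P = V S Vᵀ`). -/
def IsPolarFactor {d r : ℕ} (x x' : Matrix (Fin d) (Fin r) ℝ) : Prop :=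
  x'ᵀ * x' = 1 ∧ ∃ P : Matrix (Fin r) (Fin r) ℝ, P.PosDef ∧ x = x' * P

/-- Frobenius distance from `x` to a set `S`: `dist(S,x) = inf_{y ∈ S} ‖x − y‖_F`. -/
def fdist {d r : ℕ} (S : Set (Matrix (Fin d) (Fin r) ℝ)) (x : Matrix (Fin d) (Fin r) ℝ) : ℝ :=
  sInf ((fun y => fnorm (x - y)) '' S)

/-- Network average `z̄ = (1/n) Σᵢ zᵢ`. -/
def avg {n d r : ℕ} (z : Fin n → Matrix (Fin d) (Fin r) ℝ) : Matrix (Fin d) (Fin r) ℝ :=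
  (n : ℝ)⁻¹ • ∑ i, z i

/-- Frobenius norm of a stacked family: `‖𝐳‖_F = (Σᵢ ‖zᵢ‖_F²)^{1/2}`. -/
def snorm {n d r : ℕ} (z : Fin n → Matrix (Fin d) (Fin r) ℝ) : ℝ :=
  Real.sqrt (∑ i, fnorm (z i) ^ 2)


/-- The transition matrix `G̃` of the consensus-error LTI system, with
`Θ = (1+σ_W²)/(1−σ_W²)`. -/
def Gtilde (σW L' α : ℝ) : Matrix (Fin 2) (Fin 2) ℝ :=
  !![(1 + σW ^ 2) / 2 + 4 * L' ^ 2 * α ^ 2 * ((1 + σW ^ 2) / (1 - σW ^ 2)),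
       8 * ((1 + σW ^ 2) / (1 - σW ^ 2));
     α ^ 2 * L' ^ 2 * ((1 + σW ^ 2) / (1 - σW ^ 2)),
       (1 + σW ^ 2) / 2]

lemma ineqs (u A B : ℝ) (hu : 0 < u) (hu1 : u ≤ 1) (hA : 0 < A) (hB : 0 < B)
    (h16A : 16*A < u) (h16B : 16*B < u) :
    0 ≤ (2-u) + 4*(A*B) ∧ (2-u) + 4*(A*B) < 2 ∧
    0 < ((2-u)/2)^2 + 2*(2-u)*(A*B) - 8*(B*B) ∧
    ((2-u)/2)^2 + 2*(2-u)*(A*B) - 8*(B*B) < 1 ∧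
    0 < 1 - ((2-u)+4*(A*B)) + (((2-u)/2)^2 + 2*(2-u)*(A*B) - 8*(B*B)) := by
  have hAB : (16*A)*(16*B) < u*u := mul_lt_mul'' h16A h16B (by positivity) (by positivity)
  have hBB : (16*B)*(16*B) < u*u := mul_lt_mul'' h16B h16B (by positivity) (by positivity)
  have hPab : 0 < A*B := mul_pos hA hB
  have hPbb : 0 < B*B := mul_pos hB hB
  refine ⟨by nlinarith, by nlinarith, by nlinarith, by nlinarith, by nlinarith [mul_pos hPab hu]⟩

lemma quad (t d : ℝ) (μ : ℂ) (h : μ^2 - (t:ℂ)*μ + (d:ℂ) = 0)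
    (ht0 : 0 ≤ t) (ht2 : t < 2) (hd0 : 0 < d) (hd1 : d < 1) (hp1 : 0 < 1 - t + d) :
    ‖μ‖ < 1 := by
  set x := μ.re with hx
  set y := μ.im with hy
  have hre : x^2 - y^2 - t*x + d = 0 := by
    have := congrArg Complex.re h
    simpa [pow_two, Complex.mul_re, Complex.mul_im] using this
  have him : 2*x*y - t*y = 0 := by
    have := congrArg Complex.im h
    simp [pow_two, Complex.mul_re, Complex.mul_im] at this
    linarith
  have hnorm : ‖μ‖^2 = x^2 + y^2 := by
    rw [Complex.sq_norm, Complex.normSq_apply]; ring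
  have h2 : ‖μ‖^2 < 1 := by
    rcases eq_or_ne y 0 with hy0 | hy0
    · rw [hy0] at hre
      have hx1 : x < 1 := by nlinarith
      have hx2 : -1 < x := by nlinarith
      rw [hnorm, hy0]; nlinarith
    · have hxt : 2*x = t := by
        have : y * (2*x - t) = 0 := by linarith [him]
        rcases mul_eq_zero.mp this with h' | h'
        · exact absurd h' hy0
        · linarith
      rw [hnorm]
      nlinarith [hre]
  nlinarith [norm_nonneg μ]


/-- stability of the consensus-error LTI system. If
`0 < α < (1−σ_W²)²/(16L'(1+σ_W²))`, then the spectral radius of `G̃` is strictly less than `1`,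
i.e. every complex eigenvalue `μ` of `G̃` satisfies `‖μ‖ < 1`. -/
theorem Gtilde_spectral_radius_lt_one (σW L' α : ℝ)
    (hσ0 : 0 ≤ σW) (hσ1 : σW < 1) (hL' : 0 < L') (hα : 0 < α)
    (hαlt : α < (1 - σW ^ 2) ^ 2 / (16 * L' * (1 + σW ^ 2))) :
    ∀ μ ∈ spectrum ℂ ((Gtilde σW L' α).map (fun t : ℝ => (t : ℂ))), ‖μ‖ < 1 := by
  intro μ hμ
  have hσsq : σW ^ 2 < 1 := by nlinarith
  set u : ℝ := 1 - σW ^ 2 with hu_def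
  have hu : 0 < u := by rw [hu_def]; nlinarith
  have hu1 : u ≤ 1 := by rw [hu_def]; nlinarith [sq_nonneg σW]
  set Θ : ℝ := (1 + σW ^ 2) / (1 - σW ^ 2) with hΘ_def
  have hΘu : Θ * u = 1 + σW ^ 2 := by
    rw [hΘ_def, ← hu_def, div_mul_cancel₀]; exact ne_of_gt hu
  have hΘ1 : 1 ≤ Θ := by
    rw [hΘ_def, ← hu_def, le_div_iff₀ hu]; nlinarith
  have hΘ0 : 0 < Θ := by linarith
  set A : ℝ := L' * α with hA_def
  set B : ℝ := L' * α * Θ with hB_def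
  have hA : 0 < A := by rw [hA_def]; positivity
  have hB : 0 < B := by rw [hB_def]; positivity
  have hkey : α * (16 * L' * (1 + σW ^ 2)) < u ^ 2 :=
    (lt_div_iff₀ (by positivity)).mp hαlt
  have h16B : 16 * B < u := by
    have h1 : (16 * B) * u < u * u := by
      have h2 : (16 * B) * u = α * (16 * L' * (Θ * u)) := by rw [hB_def]; ring
      rw [h2, hΘu]; nlinarith [hkey]
    exact lt_of_mul_lt_mul_right h1 (le_of_lt hu)
  have h16A : 16 * A < u := by
    have : A ≤ B := by rw [hA_def, hB_def]; nlinarith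
    linarith
  obtain ⟨i1, i2, i3, i4, i5⟩ := ineqs u A B hu hu1 hA hB h16A h16B
  have hdet : Matrix.det (algebraMap ℂ (Matrix (Fin 2) (Fin 2) ℂ) μ
      - (Gtilde σW L' α).map (fun t : ℝ => (t : ℂ))) = 0 := by
    rw [spectrum.mem_iff] at hμ
    by_contra hd
    exact hμ ((Matrix.isUnit_iff_isUnit_det _).mpr (isUnit_iff_ne_zero.mpr hd))
  have hc1 : (1 + σW ^ 2) = 2 - u := by rw [hu_def]; ring
  have heq : μ ^ 2 - (((2-u) + 4*(A*B) : ℝ) : ℂ) * μ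
      + ((((2-u)/2)^2 + 2*(2-u)*(A*B) - 8*(B*B) : ℝ) : ℂ) = 0 := by
    simp [Gtilde, Matrix.det_fin_two, Matrix.algebraMap_eq_diagonal, Matrix.map_apply] at hdet
    rw [hA_def, hB_def, hΘ_def, hu_def]
    push_cast
    linear_combination hdet
  exact quad _ _ μ heq i1 i2 i3 i4 i5


end DRFGT
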